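/- Suppose |M|_{ℓ¹} ≤ 1 and m_{ij} ≠ 0 for every i, j ∈ {1,…,N}. Set μ_N = max_{j ∈ {1,…,N}} ∑_{i=1}^{N−1} |m_{ij}| and ν_N = max_{j ∈ {1,…,N}} |m_{Nj}|; then μ_N, ν_N ∈ (0,1), and for every i, j ∈ {1,…,N}, every 𝔫 ∈ 𝔑, every x ∈ [0, L_j], every t ∈ ℝ, and every choice of measurable signals α_r : ℝ → [0,1] (r ∈ {1,…,N_d}), one has |θ^{(i)}_{j,𝔫,x,t}| ≤ C(|𝔫|_{ℓ¹}, n_N) · μ_N^{|𝔫|_{ℓ¹} − n_N} · ν_N^{n_N}, where C(n, m) denotes the binomial coefficient n choose m. -/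

import Mathlib

open MeasureTheory Finset

noncomputable def Lsum {N : ℕ} (L : Fin N → ℝ) (n : Fin N → ℕ) : ℝ :=
  ∑ i, (n i : ℝ) * L i

noncomputable def eps {N : ℕ} (L a b : Fin N → ℝ) (α : Fin N → ℝ → ℝ)
    (j : Fin N) (n : Fin N → ℕ) (x t : ℝ) : ℝ :=
  Real.exp (- ∫ s in Set.Icc (t - Lsum L n - L j + max x (a j)) (t - Lsum L n - L j + b j), α j s)

def IsTheta {N : ℕ} (L a b : Fin N → ℝ) (m : Fin N → Fin N → ℝ) (α : Fin N → ℝ → ℝ)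
    (θ : Fin N → Fin N → (Fin N → ℕ) → ℝ → ℝ → ℝ) : Prop :=
  (∀ i j n x t, θ i j n x t = eps L a b α j n x t * θ i j n (L j) t) ∧
  (∀ i j t, θ i j (fun _ => 0) (L j) t = m i j) ∧
  (∀ i j n t, n ≠ (fun _ => 0) → θ i j n (L j) t =
    ∑ k ∈ Finset.univ.filter (fun k => 1 ≤ n k),
      m k j * θ i k (fun l => n l - if l = k then 1 else 0) 0 t)

def PEsignal (T μ : ℝ) (α : ℝ → ℝ) : Prop :=
  Measurable α ∧ (∀ s, α s ∈ Set.Icc (0:ℝ) 1) ∧ ∀ t : ℝ, μ ≤ ∫ s in t..(t + T), α s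

noncomputable def fracMod (x y : ℝ) : ℝ := x - ⌊x / y⌋ * y


/-- Refined binomial estimate `|θ| ≤ C(|𝔫|, n_N) μ_N^{|𝔫|-n_N} ν_N^{n_N}`
(proof of Lemma `CoroBinBound`). -/
theorem stmt11 {N Nd : ℕ} (hN : 2 ≤ N) (hNd1 : 1 ≤ Nd) (hNdN : Nd ≤ N)
    (L a b : Fin N → ℝ) (m : Fin N → Fin N → ℝ)
    (hL : ∀ i, 0 < L i)
    (hab : ∀ j : Fin N, (j : ℕ) < Nd → 0 ≤ a j ∧ a j < b j ∧ b j ≤ L j)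
    (hab' : ∀ j : Fin N, Nd ≤ (j : ℕ) → a j = L j ∧ b j = L j)
    (hM : ∀ j, ∑ i, |m i j| ≤ 1)
    (hMne : ∀ i j, m i j ≠ 0) :
    (0 < ⨆ j, ∑ i ∈ Finset.univ.filter (fun i : Fin N => (i : ℕ) < N - 1), |m i j|) ∧
    (⨆ j, ∑ i ∈ Finset.univ.filter (fun i : Fin N => (i : ℕ) < N - 1), |m i j|) < 1 ∧
    (0 < ⨆ j, |m ⟨N - 1, by omega⟩ j|) ∧ (⨆ j, |m ⟨N - 1, by omega⟩ j|) < 1 ∧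
    ∀ α : Fin N → ℝ → ℝ,
      (∀ j, Measurable (α j)) → (∀ j s, α j s ∈ Set.Icc (0:ℝ) 1) →
      (∀ j : Fin N, Nd ≤ (j : ℕ) → ∀ s, α j s = 1) →
      ∀ θ : Fin N → Fin N → (Fin N → ℕ) → ℝ → ℝ → ℝ, IsTheta L a b m α θ →
      ∀ (i j : Fin N) (n : Fin N → ℕ) (x t : ℝ), x ∈ Set.Icc 0 (L j) →
        |θ i j n x t| ≤ ((∑ i', n i').choose (n ⟨N - 1, by omega⟩) : ℝ) *
          (⨆ j', ∑ i' ∈ Finset.univ.filter (fun i' : Fin N => (i' : ℕ) < N - 1), |m i' j'|)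
            ^ ((∑ i', n i') - n ⟨N - 1, by omega⟩) *
          (⨆ j', |m ⟨N - 1, by omega⟩ j'|) ^ (n ⟨N - 1, by omega⟩) := by
  have hN1 : N - 1 < N := by omega
  have hNe : Nonempty (Fin N) := ⟨⟨0, by omega⟩⟩
  set last : Fin N := ⟨N - 1, hN1⟩ with hlastdef
  set μ := ⨆ j, ∑ i ∈ Finset.univ.filter (fun i : Fin N => (i : ℕ) < N - 1), |m i j| with hμdef
  set ν := ⨆ j, |m last j| with hνdef
  have hfun : ∀ j : Fin N,
      Finset.univ.filter (fun i : Fin N => ¬ ((i : ℕ) < N - 1)) = {last} := by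
    intro j
    ext k
    simp only [Finset.mem_filter, Finset.mem_univ, true_and, Finset.mem_singleton,
      Fin.ext_iff, hlastdef]
    have := k.isLt
    omega
  have hsplit : ∀ j : Fin N,
      (∑ i ∈ Finset.univ.filter (fun i : Fin N => (i : ℕ) < N - 1), |m i j|) + |m last j|
        = ∑ i, |m i j| := by
    intro j
    rw [← Finset.sum_filter_add_sum_filter_not Finset.univ
      (fun i : Fin N => (i : ℕ) < N - 1) (fun i => |m i j|)]
    congr 1
    rw [hfun j, Finset.sum_singleton]
  have hμ_le : ∀ j : Fin N,
      (∑ i ∈ Finset.univ.filter (fun i : Fin N => (i : ℕ) < N - 1), |m i j|) ≤ μ := by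
    intro j
    rw [hμdef]
    exact le_ciSup (f := fun j' : Fin N =>
      ∑ i ∈ Finset.univ.filter (fun i : Fin N => (i : ℕ) < N - 1), |m i j'|)
      (Set.Finite.bddAbove (Set.finite_range _)) j
  have hν_le : ∀ j : Fin N, |m last j| ≤ ν := by
    intro j
    rw [hνdef]
    exact le_ciSup (f := fun j' : Fin N => |m last j'|)
      (Set.Finite.bddAbove (Set.finite_range _)) j
  have hi0 : (⟨0, by omega⟩ : Fin N) ∈
      Finset.univ.filter (fun i : Fin N => (i : ℕ) < N - 1) := by
    simp only [Finset.mem_filter, Finset.mem_univ, true_and]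
    omega
  have hμpos : 0 < μ := by
    have h1 : |m ⟨0, by omega⟩ ⟨0, by omega⟩| ≤
        ∑ i ∈ Finset.univ.filter (fun i : Fin N => (i : ℕ) < N - 1), |m i ⟨0, by omega⟩| :=
      Finset.single_le_sum (f := fun i => |m i ⟨0, by omega⟩|) (fun k _ => abs_nonneg _) hi0
    have h2 : 0 < |m ⟨0, by omega⟩ (⟨0, by omega⟩ : Fin N)| := abs_pos.mpr (hMne _ _)
    exact lt_of_lt_of_le h2 (h1.trans (hμ_le _))
  have hνpos : 0 < ν := by
    have h2 : 0 < |m last (⟨0, by omega⟩ : Fin N)| := abs_pos.mpr (hMne _ _)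
    exact lt_of_lt_of_le h2 (hν_le _)
  have hμlt : μ < 1 := by
    obtain ⟨j0, hj0⟩ := Finite.exists_max
      (fun j : Fin N => ∑ i ∈ Finset.univ.filter (fun i : Fin N => (i : ℕ) < N - 1), |m i j|)
    have h1 : μ ≤ ∑ i ∈ Finset.univ.filter (fun i : Fin N => (i : ℕ) < N - 1), |m i j0| :=
      ciSup_le hj0
    have h2 : 0 < |m last j0| := abs_pos.mpr (hMne _ _)
    have h3 := hsplit j0
    have h4 := hM j0
    linarith
  have hνlt : ν < 1 := by
    obtain ⟨j0, hj0⟩ := Finite.exists_max (fun j : Fin N => |m last j|)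
    have h1 : ν ≤ |m last j0| := ciSup_le hj0
    have h2 : 0 < |m ⟨0, by omega⟩ j0| := abs_pos.mpr (hMne _ _)
    have h2' : |m ⟨0, by omega⟩ j0| ≤
        ∑ i ∈ Finset.univ.filter (fun i : Fin N => (i : ℕ) < N - 1), |m i j0| :=
      Finset.single_le_sum (f := fun i => |m i j0|) (fun k _ => abs_nonneg _) hi0
    have h3 := hsplit j0
    have h4 := hM j0
    linarith
  refine ⟨hμpos, hμlt, hνpos, hνlt, ?_⟩
  intro α hαm hα hα1 θ hθ
  obtain ⟨hθ1, hθ2, hθ3⟩ := hθ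
  have hμ0 : (0:ℝ) ≤ μ := hμpos.le
  have hν0 : (0:ℝ) ≤ ν := hνpos.le
  have key : ∀ S : ℕ, ∀ n : Fin N → ℕ, ∑ i', n i' = S → ∀ (i j : Fin N) (x t : ℝ),
      |θ i j n x t| ≤ (S.choose (n last) : ℝ) * μ ^ (S - n last) * ν ^ (n last) := by
    intro S
    induction S using Nat.strong_induction_on with
    | _ S IH =>
      intro n hS i j x t
      -- reduce to x = L j
      have hLj : |θ i j n x t| ≤ |θ i j n (L j) t| := by
        rw [hθ1 i j n x t, abs_mul]
        have hε1 : |eps L a b α j n x t| ≤ 1 := by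
          rw [eps, abs_of_pos (Real.exp_pos _), Real.exp_le_one_iff, neg_nonpos]
          have : (0:ℝ) ≤ ∫ s in Set.Icc (t - Lsum L n - L j + max x (a j))
              (t - Lsum L n - L j + b j), α j s :=
            MeasureTheory.setIntegral_nonneg measurableSet_Icc (fun s _ => (hα j s).1)
          linarith
        calc |eps L a b α j n x t| * |θ i j n (L j) t|
            ≤ 1 * |θ i j n (L j) t| :=
              mul_le_mul_of_nonneg_right hε1 (abs_nonneg _)
          _ = |θ i j n (L j) t| := one_mul _
      refine hLj.trans ?_
      by_cases hn0 : n = (fun _ => 0)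
      · subst hn0
        simp only [Finset.sum_const_zero] at hS
        subst hS
        rw [hθ2 i j t]
        simp only [Nat.choose_self, Nat.cast_one, pow_zero, mul_one, one_mul, Nat.sub_zero]
        have h1 : |m i j| ≤ ∑ i', |m i' j| :=
          Finset.single_le_sum (f := fun i' => |m i' j|) (fun k _ => abs_nonneg _) (Finset.mem_univ i)
        exact h1.trans (hM j)
      · rw [hθ3 i j n t hn0]
        have hS1 : 1 ≤ S := by
          rcases Nat.eq_zero_or_pos S with h | h
          · exfalso
            apply hn0
            funext l
            have := Finset.sum_eq_zero_iff.mp (hS.trans h)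
            exact this l (Finset.mem_univ l)
          · exact h
        have hnlS : n last ≤ S := by
          rw [← hS]
          exact Finset.single_le_sum (f := fun l => n l) (fun k _ => Nat.zero_le _) (Finset.mem_univ last)
        set F := Finset.univ.filter (fun k => 1 ≤ n k) with hF
        -- per-term bound
        have hterm : ∀ k ∈ F,
            |m k j * θ i k (fun l => n l - if l = k then 1 else 0) 0 t| ≤
            |m k j| * (((S-1).choose (n last - if last = k then 1 else 0) : ℝ) *
              μ ^ (S - 1 - (n last - if last = k then 1 else 0)) *
              ν ^ (n last - if last = k then 1 else 0)) := by
          intro k hk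
          have hnk : 1 ≤ n k := (Finset.mem_filter.mp hk).2
          have hsum' : ∑ l, (n l - if l = k then 1 else 0) = S - 1 := by
            have h1 : ∑ l, ((n l - if l = k then 1 else 0) + if l = k then 1 else 0)
                = ∑ l, n l := by
              refine Finset.sum_congr rfl (fun l _ => ?_)
              rcases eq_or_ne l k with h | h
              · subst h; rw [if_pos rfl]; omega
              · rw [if_neg h]
                omega
            rw [Finset.sum_add_distrib] at h1
            have h2 : ∑ l : Fin N, (if l = k then 1 else 0) = 1 := by
              simp
            omega
          have hIH := IH (S - 1) (by omega) (fun l => n l - if l = k then 1 else 0)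
            hsum' i k 0 t
          rw [abs_mul]
          exact mul_le_mul_of_nonneg_left hIH (abs_nonneg _)
        have hsum_bound : |∑ k ∈ F, m k j * θ i k (fun l => n l - if l = k then 1 else 0) 0 t|
            ≤ ∑ k ∈ F, |m k j| * (((S-1).choose (n last - if last = k then 1 else 0) : ℝ) *
              μ ^ (S - 1 - (n last - if last = k then 1 else 0)) *
              ν ^ (n last - if last = k then 1 else 0)) :=
          (Finset.abs_sum_le_sum_abs _ _).trans (Finset.sum_le_sum hterm)
        refine hsum_bound.trans ?_
        set nl := n last with hnl
        have hB1nn : (0:ℝ) ≤ ((S-1).choose nl : ℝ) * μ ^ (S - 1 - nl) * ν ^ nl := by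
          positivity
        by_cases hnl0 : nl = 0
        · -- all k ∈ F have k ≠ last
          have hFsub : F ⊆ Finset.univ.filter (fun i : Fin N => (i : ℕ) < N - 1) := by
            intro k hk
            have hnk : 1 ≤ n k := (Finset.mem_filter.mp hk).2
            simp only [Finset.mem_filter, Finset.mem_univ, true_and]
            have hkl : k ≠ last := by
              intro h; rw [h] at hnk; omega
            have hk1 := k.isLt
            have hkl' : (k : ℕ) ≠ N - 1 := by
              simpa [Fin.ext_iff, hlastdef] using hkl
            omega
          have heq : ∀ k ∈ F, |m k j| * (((S-1).choose (nl - if last = k then 1 else 0) : ℝ) *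
              μ ^ (S - 1 - (nl - if last = k then 1 else 0)) *
              ν ^ (nl - if last = k then 1 else 0)) =
              |m k j| * (((S-1).choose nl : ℝ) * μ ^ (S - 1 - nl) * ν ^ nl) := by
            intro k hk
            have : nl - (if last = k then 1 else 0) = nl := by omega
            rw [this]
          rw [Finset.sum_congr rfl heq, ← Finset.sum_mul]
          calc (∑ k ∈ F, |m k j|) * (((S-1).choose nl : ℝ) * μ ^ (S - 1 - nl) * ν ^ nl)
              ≤ μ * (((S-1).choose nl : ℝ) * μ ^ (S - 1 - nl) * ν ^ nl) := by
                refine mul_le_mul_of_nonneg_right ?_ hB1nn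
                refine le_trans (Finset.sum_le_sum_of_subset_of_nonneg hFsub
                  (fun k _ _ => abs_nonneg _)) (hμ_le j)
            _ = (S.choose nl : ℝ) * μ ^ (S - nl) * ν ^ nl := by
                rw [hnl0]
                simp only [Nat.choose_zero_right, Nat.cast_one, pow_zero, mul_one,
                  Nat.sub_zero, one_mul]
                rw [← pow_succ']
                congr 1
                omega
        · -- last ∈ F
          have hnl1 : 1 ≤ nl := by omega
          have hlastF : last ∈ F := by
            simp only [hF, Finset.mem_filter, Finset.mem_univ, true_and]
            exact hnl1
          rw [← Finset.add_sum_erase F _ hlastF]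
          have herase : ∀ k ∈ F.erase last,
              |m k j| * (((S-1).choose (nl - if last = k then 1 else 0) : ℝ) *
              μ ^ (S - 1 - (nl - if last = k then 1 else 0)) *
              ν ^ (nl - if last = k then 1 else 0)) =
              |m k j| * (((S-1).choose nl : ℝ) * μ ^ (S - 1 - nl) * ν ^ nl) := by
            intro k hk
            have hkl : k ≠ last := Finset.ne_of_mem_erase hk
            have : (if last = k then 1 else 0) = 0 := by
              rw [if_neg (fun h => hkl h.symm)]
            rw [this, Nat.sub_zero]
          rw [Finset.sum_congr rfl herase, ← Finset.sum_mul]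
          have hFesub : F.erase last ⊆
              Finset.univ.filter (fun i : Fin N => (i : ℕ) < N - 1) := by
            intro k hk
            have hkl : k ≠ last := Finset.ne_of_mem_erase hk
            simp only [Finset.mem_filter, Finset.mem_univ, true_and]
            have hk1 := k.isLt
            have hkl' : (k : ℕ) ≠ N - 1 := by
              simpa [Fin.ext_iff, hlastdef] using hkl
            omega
          have h2 : (∑ k ∈ F.erase last, |m k j|) *
              (((S-1).choose nl : ℝ) * μ ^ (S - 1 - nl) * ν ^ nl)
              ≤ μ * (((S-1).choose nl : ℝ) * μ ^ (S - 1 - nl) * ν ^ nl) := by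
            refine mul_le_mul_of_nonneg_right ?_ hB1nn
            exact le_trans (Finset.sum_le_sum_of_subset_of_nonneg hFesub
              (fun k _ _ => abs_nonneg _)) (hμ_le j)
          have hifeq : (if last = last then 1 else 0) = 1 := if_pos rfl
          rw [hifeq]
          have h1 : |m last j| * (((S-1).choose (nl - 1) : ℝ) *
              μ ^ (S - 1 - (nl - 1)) * ν ^ (nl - 1))
              ≤ ν * (((S-1).choose (nl - 1) : ℝ) * μ ^ (S - 1 - (nl - 1)) * ν ^ (nl - 1)) := by
            refine mul_le_mul_of_nonneg_right (hν_le j) (by positivity)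
          refine le_trans (add_le_add h1 h2) ?_
          -- final algebra
          have hνB2 : ν * (((S-1).choose (nl - 1) : ℝ) * μ ^ (S - 1 - (nl - 1)) * ν ^ (nl - 1))
              = ((S-1).choose (nl - 1) : ℝ) * μ ^ (S - nl) * ν ^ nl := by
            have e1 : S - 1 - (nl - 1) = S - nl := by omega
            have e2 : ν ^ nl = ν ^ (nl - 1) * ν := by
              rw [← pow_succ]
              congr 1
              omega
            rw [e1, e2]
            ring
          have hμB1 : μ * (((S-1).choose nl : ℝ) * μ ^ (S - 1 - nl) * ν ^ nl)
              ≤ ((S-1).choose nl : ℝ) * μ ^ (S - nl) * ν ^ nl := by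
            rcases Nat.lt_or_ge nl S with h | h
            · have e1 : μ ^ (S - nl) = μ ^ (S - 1 - nl) * μ := by
                rw [← pow_succ]
                congr 1
                omega
              refine le_of_eq ?_
              rw [e1]
              ring
            · have : nl = S := le_antisymm hnlS h
              have hc : (S-1).choose nl = 0 := Nat.choose_eq_zero_of_lt (by omega)
              rw [hc]
              simp
          have hpascal : ((S-1).choose (nl - 1) : ℝ) + ((S-1).choose nl : ℝ)
              = (S.choose nl : ℝ) := by
            have h1 : S - 1 + 1 = S := by omega
            have h2 : nl - 1 + 1 = nl := by omega
            rw [← Nat.cast_add]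
            congr 1
            calc (S-1).choose (nl-1) + (S-1).choose nl
                = (S-1).choose (nl-1) + (S-1).choose ((nl-1)+1) := by rw [h2]
              _ = ((S-1)+1).choose ((nl-1)+1) := (Nat.choose_succ_succ' _ _).symm
              _ = S.choose nl := by rw [h1, h2]
          calc ν * (((S-1).choose (nl - 1) : ℝ) * μ ^ (S - 1 - (nl - 1)) * ν ^ (nl - 1))
                + μ * (((S-1).choose nl : ℝ) * μ ^ (S - 1 - nl) * ν ^ nl)
              ≤ ((S-1).choose (nl - 1) : ℝ) * μ ^ (S - nl) * ν ^ nl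
                + ((S-1).choose nl : ℝ) * μ ^ (S - nl) * ν ^ nl := by
                rw [hνB2]
                exact add_le_add_right hμB1 _
            _ = (((S-1).choose (nl - 1) : ℝ) + ((S-1).choose nl : ℝ))
                * μ ^ (S - nl) * ν ^ nl := by ring
            _ = (S.choose nl : ℝ) * μ ^ (S - nl) * ν ^ nl := by rw [hpascal]
  intro i j n x t hx
  exact key (∑ i', n i') n rfl i j x t
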